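/- Let f : E → ℝ∪{+∞} be lower semicontinuous and prox-bounded, x a point with f(x) finite, and v ∈ E. If v is not a Fréchet subgradient of f at x, then liminf_{α↓0} (f_α(x+αv) − f(x))/α < |v|²/2, where f_α is the Moreau envelope. -/

import Mathlib

open Filter Topology

/-- The Moreau envelope. -/
noncomputable def mEnv {E : Type*} [NormedAddCommGroup E] [InnerProductSpace ℝ E]
    (f : E → EReal) (α : ℝ) (x : E) : EReal :=
  ⨅ y, f y + ((‖y - x‖ ^ 2 / (2 * α) : ℝ) : EReal)

/-- `v` is a Fréchet subgradient of `f` at `x`: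
`f(y) ≥ f(x) + ⟨v, y−x⟩ + o(‖y−x‖)`. -/
def FSubgrad {E : Type*} [NormedAddCommGroup E] [InnerProductSpace ℝ E]
    (f : E → EReal) (x v : E) : Prop :=
  ∀ ε : ℝ, 0 < ε → ∀ᶠ y in nhds x,
    f x + (((inner ℝ v (y - x) : ℝ) - ε * ‖y - x‖ : ℝ) : EReal) ≤ f y

/-- `f` is prox-bounded: it majorizes some quadratic. -/
def ProxBounded {E : Type*} [NormedAddCommGroup E] [InnerProductSpace ℝ E]
    (f : E → EReal) : Prop :=
  ∃ r c : ℝ, ∀ y, ((-(r / 2) * ‖y‖ ^ 2 - c : ℝ) : EReal) ≤ f y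

/-- If `f` is lsc and prox-bounded, `f x` is finite, and `v` is NOT a Fréchet
subgradient of `f` at `x`, then `liminf_{α↓0} (f_α(x+αv) − f(x))/α < ‖v‖²/2`. -/
theorem statement2 {E : Type*} [NormedAddCommGroup E] [InnerProductSpace ℝ E]
    [FiniteDimensional ℝ E]
    (f : E → EReal) (hlsc : LowerSemicontinuous f) (hpb : ProxBounded f)
    (x : E) (fx : ℝ) (hfx : f x = (fx : EReal))
    (v : E) (hv : ¬ FSubgrad f x v) :
    Filter.liminf (fun α : ℝ => (mEnv f α (x + α • v) - f x) / ((α : ℝ) : EReal))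
        (nhdsWithin 0 (Set.Ioi 0))
      < ((‖v‖ ^ 2 / 2 : ℝ) : EReal) := by
  rw [FSubgrad] at hv
  push_neg at hv
  obtain ⟨ε, hε, hfreq⟩ := hv
  simp only [← not_le] at hfreq
  -- target intermediate bound
  have key : Filter.liminf (fun α : ℝ => (mEnv f α (x + α • v) - f x) / ((α : ℝ) : EReal))
      (nhdsWithin 0 (Set.Ioi 0)) ≤ ((‖v‖ ^ 2 / 2 - ε ^ 2 / 2 : ℝ) : EReal) := by
    apply Filter.liminf_le_of_frequently_le'
    rw [Filter.frequently_iff]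
    intro U hU
    rw [Metric.mem_nhdsWithin_iff] at hU
    obtain ⟨δ, hδ, hsub⟩ := hU
    -- find a bad y close to x
    have hball : Metric.ball x (ε * δ) ∈ nhds x :=
      Metric.ball_mem_nhds x (by positivity)
    obtain ⟨y, hyU, hy⟩ := (hfreq.and_eventually (Filter.eventually_mem_set.mpr hball)).exists
    rw [not_le] at hyU
    -- y ≠ x
    have hyx : y ≠ x := by
      rintro rfl
      simp at hyU
    have hnorm : 0 < ‖y - x‖ := by
      rw [norm_pos_iff, sub_ne_zero]; exact hyx
    set α := ‖y - x‖ / ε with hα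
    have hαpos : 0 < α := by positivity
    have hαδ : α < δ := by
      rw [hα, div_lt_iff₀ hε]
      calc ‖y - x‖ < ε * δ := by
            have := hy; rwa [Metric.mem_ball, dist_eq_norm] at this
        _ = δ * ε := by ring
    refine ⟨α, hsub ⟨by simpa [Metric.mem_ball, abs_of_pos hαpos] using hαδ, hαpos⟩, ?_⟩
    -- f y is real
    obtain ⟨r, c, hrc⟩ := hpb
    have hbot : f y ≠ ⊥ := by
      intro h
      have := hrc y
      rw [h, le_bot_iff] at this
      exact EReal.coe_ne_bot _ this
    have htop : f y ≠ ⊤ := by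
      intro h
      rw [h, hfx, ← EReal.coe_add] at hyU
      exact absurd hyU (not_lt.mpr le_top)
    lift f y to ℝ using ⟨htop, hbot⟩ with fy hfy
    -- key real inequalities
    have hnormα : ‖y - x‖ = ε * α := by
      show ‖y - x‖ = ε * (‖y - x‖ / ε)
      field_simp
    have hfylt : fy < fx + ((inner ℝ v (y - x) : ℝ) - ε * ‖y - x‖) := by
      rw [hfx, ← EReal.coe_add, EReal.coe_lt_coe_iff] at hyU
      exact hyU
    -- bound mEnv by the value at y
    have henv : mEnv f α (x + α • v) ≤
        ((fy + ‖y - (x + α • v)‖ ^ 2 / (2 * α) : ℝ) : EReal) := by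
      rw [mEnv, EReal.coe_add, hfy]
      exact iInf_le _ y
    -- real quadratic computation
    have hquad : fy + ‖y - (x + α • v)‖ ^ 2 / (2 * α) - fx ≤
        (‖v‖ ^ 2 / 2 - ε ^ 2 / 2) * α := by
      have hexp : ‖y - (x + α • v)‖ ^ 2 =
          ‖y - x‖ ^ 2 - 2 * α * (inner ℝ v (y - x) : ℝ) + α ^ 2 * ‖v‖ ^ 2 := by
        have h1 : y - (x + α • v) = (y - x) - α • v := by abel
        rw [h1, norm_sub_sq_real, norm_smul, real_inner_smul_right,
          real_inner_comm]
        simp [abs_of_pos hαpos, mul_pow]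
        ring
      rw [hexp, hnormα]
      have h2 : (ε * α) ^ 2 / (2 * α) = ε ^ 2 * α / 2 := by
        field_simp
      have hle : fy ≤ fx + ((inner ℝ v (y - x) : ℝ) - ε * (ε * α)) := by
        rw [← hnormα]; exact hfylt.le
      have key2 : ((ε * α) ^ 2 - 2 * α * (inner ℝ v (y - x) : ℝ) + α ^ 2 * ‖v‖ ^ 2) / (2 * α)
          = ε ^ 2 * α / 2 - (inner ℝ v (y - x) : ℝ) + α * ‖v‖ ^ 2 / 2 := by
        field_simp
      rw [key2]
      nlinarith [hle]
    -- conclude in EReal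
    have hsubE : mEnv f α (x + α • v) - f x ≤
        (((‖v‖ ^ 2 / 2 - ε ^ 2 / 2) * α : ℝ) : EReal) := by
      calc mEnv f α (x + α • v) - f x
          ≤ ((fy + ‖y - (x + α • v)‖ ^ 2 / (2 * α) : ℝ) : EReal) - (fx : EReal) :=
            EReal.sub_le_sub henv (le_of_eq hfx.symm)
        _ = ((fy + ‖y - (x + α • v)‖ ^ 2 / (2 * α) - fx : ℝ) : EReal) := by
            rw [← EReal.coe_sub]
        _ ≤ _ := EReal.coe_le_coe_iff.mpr hquad
    rw [EReal.div_le_iff_le_mul (by exact_mod_cast hαpos) (by simp)]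
    calc mEnv f α (x + α • v) - f x
        ≤ (((‖v‖ ^ 2 / 2 - ε ^ 2 / 2) * α : ℝ) : EReal) := hsubE
      _ = ((α : ℝ) : EReal) * ((‖v‖ ^ 2 / 2 - ε ^ 2 / 2 : ℝ) : EReal) := by
          rw [← EReal.coe_mul, mul_comm]
  refine lt_of_le_of_lt key ?_
  rw [EReal.coe_lt_coe_iff]
  nlinarith
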